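/- arXiv:2106.10912 — 2 statements merged into one kernel-verified Lean document; each statement's English description precedes it below -/
import Mathlib

section
/- Let I be a zero-dimensional ideal of k[x_1,...,x_n] (k of characteristic 0) and suppose the minimal polynomial m of the image of a linear form u in k[x_1,...,x_n]/I has degree d = dim_k(k[x_1,...,x_n]/I). Then I is a radical ideal if and only if m is squarefree. -/
set_option synthInstance.maxHeartbeats 1000000 in
theorem stmt11 (k : Type*) [Field k] [CharZero k] (n : ℕ)
    (I : Ideal (MvPolynomial (Fin n) k))
    [FiniteDimensional k (MvPolynomial (Fin n) k ⧸ I)] (d : ℕ)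
    (hd : Module.finrank k (MvPolynomial (Fin n) k ⧸ I) = d)
    (c : Fin n → k)
    (u : MvPolynomial (Fin n) k ⧸ I)
    (hu : u = Ideal.Quotient.mk I (∑ i, MvPolynomial.C (c i) * MvPolynomial.X i))
    (hdeg : (minpoly k u).natDegree = d) :
    I.IsRadical ↔ Squarefree (minpoly k u) := by
  classical
  have hint : IsIntegral k u := IsIntegral.of_finite k u
  have hm0 : minpoly k u ≠ 0 := minpoly.ne_zero hint
  have hfr : Module.finrank k (Algebra.adjoin k ({u} : Set (MvPolynomial (Fin n) k ⧸ I))) = d := by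
    rw [(Algebra.adjoin.powerBasis hint).finrank, Algebra.adjoin.powerBasis_dim, hdeg]
  have htop : Algebra.adjoin k ({u} : Set (MvPolynomial (Fin n) k ⧸ I)) = ⊤ := by
    apply Algebra.toSubmodule_eq_top.1
    apply Submodule.eq_top_of_finrank_eq
    rw [(Algebra.adjoin k ({u} : Set (MvPolynomial (Fin n) k ⧸ I))).finrank_toSubmodule, hfr, hd]
  have hsurj : Function.Surjective
      (Polynomial.aeval u : Polynomial k →ₐ[k] MvPolynomial (Fin n) k ⧸ I) := by
    intro a
    have : a ∈ Algebra.adjoin k ({u} : Set (MvPolynomial (Fin n) k ⧸ I)) := htop ▸ Algebra.mem_top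
    rwa [Algebra.adjoin_singleton_eq_range_aeval, AlgHom.mem_range] at this
  have hker : RingHom.ker (Polynomial.aeval u : Polynomial k →ₐ[k] MvPolynomial (Fin n) k ⧸ I)
      = Ideal.span {minpoly k u} := minpoly.ker_aeval_eq_span_minpoly k u
  have e : (Polynomial k ⧸ Ideal.span {minpoly k u}) ≃+* MvPolynomial (Fin n) k ⧸ I := by
    have := Ideal.quotientKerAlgEquivOfSurjective hsurj
    exact (Ideal.quotEquivOfEq hker.symm).trans this.toRingEquiv
  have hred : IsReduced (MvPolynomial (Fin n) k ⧸ I) ↔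
      IsReduced (Polynomial k ⧸ Ideal.span {minpoly k u}) := by
    constructor
    · intro h; exact isReduced_of_injective (e : _ →+* MvPolynomial (Fin n) k ⧸ I) e.injective
    · intro h; exact isReduced_of_injective (e.symm : MvPolynomial (Fin n) k ⧸ I →+* Polynomial k ⧸ Ideal.span {minpoly k u}) e.symm.injective
  rw [Ideal.isRadical_iff_quotient_reduced, hred,
    ← Ideal.isRadical_iff_quotient_reduced, ← isRadical_iff_span_singleton,
    isRadical_iff_squarefree_of_ne_zero hm0]
end

section
/- Let I be a zero-dimensional ideal of k[x_1,...,x_n], and suppose the minimal polynomial m of the image of a variable x_n in k[x_1,...,x_n]/I is not squarefree. Let m* = m / gcd(m, m') be its squarefree part. Then the ideal I + (m*(x_n)) contains I strictly, its radical equals the radical of I, and m*(x_n) vanishes on the whole variety V(I). -/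
open Polynomial UniqueFactorizationMonoid in
theorem aux1' {K : Type*} [Field K] [CharZero K] {m g q p : K[X]}
    (hm0 : m ≠ 0) (hgm : g * q = m) (hg' : g ∣ m.derivative)
    (hp : Prime p) (hpm : p ∣ m) : p ∣ q := by
  by_contra hpq
  obtain ⟨e, u, hpu, hmu⟩ := WfDvdMonoid.max_power_factor hm0 hp.irreducible
  have he : e ≠ 0 := by
    rintro rfl
    rw [pow_zero, one_mul] at hmu
    exact hpu (hmu ▸ hpm)
  obtain ⟨d, rfl⟩ := Nat.exists_eq_succ_of_ne_zero he
  have hpe_m : p ^ (d + 1) ∣ m := hmu ▸ Dvd.intro _ rfl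
  have hpeg : p ^ (d + 1) ∣ g := hp.pow_dvd_of_dvd_mul_right _ hpq (hgm ▸ hpe_m)
  have hpe' : p ^ (d + 1) ∣ m.derivative := hpeg.trans hg'
  have hder : m.derivative
      = p ^ d * ((C ((d+1 : ℕ) : K)) * p.derivative * u) + p ^ (d+1) * u.derivative := by
    rw [hmu, derivative_mul, derivative_pow]
    ring_nf
    simp [Nat.succ_sub_one]
    ring
  have h1 : p ^ (d + 1) ∣ p ^ d * ((C ((d+1 : ℕ) : K)) * p.derivative * u) := by
    have := dvd_sub hpe' (Dvd.intro _ (rfl : p ^ (d+1) * u.derivative = p ^ (d+1) * u.derivative))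
    rw [hder] at this
    simpa using this
  rw [pow_succ, mul_dvd_mul_iff_left (pow_ne_zero d hp.ne_zero)] at h1
  rcases (hp.dvd_mul.mp h1) with h2 | h2
  · rcases hp.dvd_mul.mp h2 with h3 | h3
    · exact hp.not_unit (isUnit_of_dvd_unit h3
        (Polynomial.isUnit_C.mpr (isUnit_iff_ne_zero.mpr (Nat.cast_ne_zero.mpr (Nat.succ_ne_zero d)))))
    · have hd0 : p.derivative ≠ 0 := by
        intro h0
        have := Polynomial.natDegree_eq_zero_of_derivative_eq_zero h0
        have hu : IsUnit p := by
          rw [Polynomial.eq_C_of_natDegree_eq_zero this]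
          refine Polynomial.isUnit_C.mpr (isUnit_iff_ne_zero.mpr ?_)
          intro hc
          apply hp.ne_zero
          rw [Polynomial.eq_C_of_natDegree_eq_zero this, hc, map_zero]
        exact hp.not_unit hu
      have hle := Polynomial.degree_le_of_dvd h3 hd0
      have hlt := Polynomial.degree_derivative_lt hp.ne_zero
      exact absurd (hle.trans_lt hlt) (lt_irrefl _)
  · exact hpu h2


open Polynomial UniqueFactorizationMonoid in
theorem aux2' {K : Type*} [Field K] [DecidableEq K] {m q : K[X]} (hm0 : m ≠ 0) (hq0 : q ≠ 0)
    (h : ∀ p : K[X], Prime p → p ∣ m → p ∣ q) :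
    m ∣ q ^ ((normalizedFactors m).card + 1) := by
  classical
  have hqN : q ^ ((normalizedFactors m).card + 1) ≠ 0 := pow_ne_zero _ hq0
  rw [dvd_iff_normalizedFactors_le_normalizedFactors hm0 hqN, normalizedFactors_pow,
    Multiset.le_iff_count]
  intro a
  by_cases ha : a ∈ normalizedFactors m
  · have hprime := prime_of_normalized_factor a ha
    have hdvd : a ∣ q := h a hprime (dvd_of_mem_normalizedFactors ha)
    have hmem : a ∈ normalizedFactors q := by
      have : normalizedFactors a ≤ normalizedFactors q :=
        (dvd_iff_normalizedFactors_le_normalizedFactors hprime.ne_zero hq0).mp hdvd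
      rw [normalizedFactors_irreducible hprime.irreducible,
        normalize_normalized_factor a ha, Multiset.singleton_le] at this
      exact this
    rw [Multiset.count_nsmul]
    calc Multiset.count a (normalizedFactors m) ≤ (normalizedFactors m).card :=
          Multiset.count_le_card _ _
      _ ≤ ((normalizedFactors m).card + 1) * 1 := by omega
      _ ≤ ((normalizedFactors m).card + 1) * Multiset.count a (normalizedFactors q) := by
          exact Nat.mul_le_mul_left _ (Multiset.one_le_count_iff_mem.mpr hmem)
  · simp [Multiset.count_eq_zero_of_notMem ha]

open scoped Classical in
theorem stmt18 (k : Type*) [Field k] [CharZero k] (n : ℕ)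
    (I : Ideal (MvPolynomial (Fin n) k))
    [FiniteDimensional k (MvPolynomial (Fin n) k ⧸ I)]
    (i : Fin n) (m : Polynomial k)
    (hm : m = minpoly k (Ideal.Quotient.mk I (MvPolynomial.X i)))
    (hns : ¬ Squarefree m)
    (mstar : Polynomial k)
    (hmstar : mstar = m / EuclideanDomain.gcd m m.derivative) :
    I < I ⊔ Ideal.span {Polynomial.aeval (MvPolynomial.X i : MvPolynomial (Fin n) k) mstar} ∧
    (I ⊔ Ideal.span
        {Polynomial.aeval (MvPolynomial.X i : MvPolynomial (Fin n) k) mstar}).radical =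
      I.radical ∧
    ∀ p : Fin n → AlgebraicClosure k,
      (∀ f ∈ I, MvPolynomial.aeval p f = 0) → Polynomial.aeval (p i) mstar = 0 := by
  classical
  set z := Ideal.Quotient.mk I (MvPolynomial.X i) with hzdef
  have hint : IsIntegral k z := IsIntegral.of_finite k z
  have hmmonic : m.Monic := hm ▸ minpoly.monic hint
  have hm0 : m ≠ 0 := hmmonic.ne_zero
  set g := EuclideanDomain.gcd m m.derivative with hgdef
  have hgl : g ∣ m := EuclideanDomain.gcd_dvd_left m m.derivative
  have hgr : g ∣ m.derivative := EuclideanDomain.gcd_dvd_right m m.derivative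
  have hg0 : g ≠ 0 := fun h => hm0 (EuclideanDomain.gcd_eq_zero_iff.mp h).1
  have hgm : g * mstar = m := by
    rw [hmstar]; exact EuclideanDomain.mul_div_cancel' hg0 hgl
  have hq0 : mstar ≠ 0 := by rintro rfl; rw [mul_zero] at hgm; exact hm0 hgm.symm
  have hgu : ¬ IsUnit g := fun hu =>
    hns (Polynomial.Separable.squarefree (EuclideanDomain.gcd_isUnit_iff.mp hu))
  have hnd : ¬ m ∣ mstar := by
    rintro ⟨c, hc⟩
    apply hgu
    have h2 : m * 1 = m * (c * g) := by
      rw [mul_one]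
      nth_rewrite 1 [← hgm, hc]
      ring
    have h1 : (1 : Polynomial k) = c * g := mul_left_cancel₀ hm0 h2
    exact IsUnit.of_mul_eq_one c (by rw [mul_comm]; exact h1.symm)
  have key : ∀ q : Polynomial k,
      Ideal.Quotient.mk I (Polynomial.aeval (MvPolynomial.X i : MvPolynomial (Fin n) k) q)
        = Polynomial.aeval z q := by
    intro q
    have := Polynomial.aeval_algHom_apply (Ideal.Quotient.mkₐ k I) (MvPolynomial.X i) q
    simpa [Ideal.Quotient.mkₐ_eq_mk] using this.symm
  have hmem : ∀ q : Polynomial k,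
      Polynomial.aeval (MvPolynomial.X i : MvPolynomial (Fin n) k) q ∈ I ↔
        Polynomial.aeval z q = 0 := by
    intro q
    rw [← Ideal.Quotient.eq_zero_iff_mem, key q]
  have hmz : Polynomial.aeval z m = 0 := by rw [hm]; exact minpoly.aeval k z
  set N := (UniqueFactorizationMonoid.normalizedFactors m).card + 1 with hN
  have hpow : m ∣ mstar ^ N :=
    aux2' hm0 hq0 (fun p hp hpm => aux1' hm0 hgm hgr hp hpm)
  set f := Polynomial.aeval (MvPolynomial.X i : MvPolynomial (Fin n) k) mstar with hfdef
  have hfN : f ^ N ∈ I := by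
    have : Polynomial.aeval z (mstar ^ N) = 0 := by
      obtain ⟨c, hc⟩ := hpow
      rw [hc, map_mul, hmz, zero_mul]
    rw [hfdef, ← map_pow, hmem _]
    exact this
  refine ⟨?_, ?_, ?_⟩
  · refine lt_of_le_of_ne le_sup_left ?_
    intro hEq
    have hmem' : f ∈ I := by
      rw [hEq]; exact Ideal.mem_sup_right (Ideal.subset_span rfl)
    exact hnd (hm ▸ minpoly.dvd k z ((hmem mstar).mp hmem'))
  · have hle : I ⊔ Ideal.span {f} ≤ I.radical := by
      refine sup_le Ideal.le_radical (Ideal.span_le.mpr ?_)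
      rw [Set.singleton_subset_iff]
      exact ⟨N, hfN⟩
    refine le_antisymm ?_ (Ideal.radical_mono le_sup_left)
    have := Ideal.radical_mono hle
    rwa [Ideal.radical_idem] at this
  · intro p hp
    have h1 : MvPolynomial.aeval p (f ^ N) = 0 := hp _ hfN
    rw [map_pow] at h1
    have h2 : MvPolynomial.aeval p f = 0 := by
      exact pow_eq_zero_iff (by omega : N ≠ 0) |>.mp h1
    rw [hfdef, ← Polynomial.aeval_algHom_apply] at h2
    simpa using h2
end
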